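/- As a module over the group algebra ℚ[S_{dn}] (under the diagonal action), W(d) is isomorphic to the direct sum ⊕_D ℛ(δ(D)), where D ranges over all (d,n)-correlated diagrams. -/

import Mathlib

noncomputable section

/-- A filling: a `d × n` tableau filled bijectively with the labels `1, …, dn`
(first index = row). -/
abbrev Filling (n d : ℕ) := (Fin d × Fin n) ≃ Fin (d * n)

/-- The free `ℚ`-vector space `𝒫` on the set of pairs of fillings. -/
abbrev PSpace (n d : ℕ) := (Filling n d × Filling n d) →₀ ℚ

/-- The antisymmetry elements of `𝒫`. -/
def AntisymSet (n d : ℕ) : Set (PSpace n d) :=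
  {x | ∃ (S T : Filling n d) (i : Fin d) (c₁ c₂ : Fin n), c₁ ≠ c₂ ∧
    (x = Finsupp.single (S, T) 1 +
          Finsupp.single ((Equiv.swap (i, c₁) (i, c₂)).trans S, T) 1 ∨
     x = Finsupp.single (S, T) 1 +
          Finsupp.single (S, (Equiv.swap (i, c₁) (i, c₂)).trans T) 1)}

/-- `W(d)`: the quotient of `𝒫` by the span of the antisymmetry elements. -/
abbrev Wspace (n d : ℕ) := PSpace n d ⧸ Submodule.span ℚ (AntisymSet n d)

/-- A `(d,n)`-correlated diagram: a `d × d` array of naturals whose row sums and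
column sums all equal `n`. -/
def CorrDiagram (n d : ℕ) :=
  {D : Fin d × Fin d → ℕ //
    (∀ i : Fin d, ∑ j : Fin d, D (i, j) = n) ∧ (∀ j : Fin d, ∑ i : Fin d, D (i, j) = n)}

open Classical in
/-- The shape of a pair of fillings `(S,T)`:
`D_{S,T}(i,j) = #{k : k occurs in row i of S and in row j of T}`. -/
def shapeOf (n d : ℕ) (ST : Filling n d × Filling n d) : Fin d × Fin d → ℕ :=
  fun ij => (Finset.univ.filter (fun k : Fin (d * n) =>
    (ST.1.symm k).1 = ij.1 ∧ (ST.2.symm k).1 = ij.2)).card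

/-- `δ(D)`: the entries of the diagram `D`, listed in non-increasing order. -/
def delta (n d : ℕ) (D : Fin d × Fin d → ℕ) : List ℕ :=
  (Multiset.sort (Multiset.map D Finset.univ.val) (· ≤ ·)).reverse

/-- A row tabloid of shape `l` on the ground set `Fin N`: a tuple of pairwise disjoint
subsets covering `Fin N`, the `t`-th having `l.get t` elements. -/
structure RowTabloid (N : ℕ) (l : List ℕ) where
  parts : Fin l.length → Finset (Fin N)
  disjoint : ∀ t t' : Fin l.length, t ≠ t' → Disjoint (parts t) (parts t')
  cover : ∀ x : Fin N, ∃ t, x ∈ parts t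
  cards : ∀ t, (parts t).card = l.get t

/-- The row tabloid module `ℛ(l)`: the free `ℚ`-vector space on row tabloids of shape `l`. -/
abbrev RowTabloidModule (N : ℕ) (l : List ℕ) := RowTabloid N l →₀ ℚ

/-- The action of a permutation of the ground set on row tabloids:
`σ·(P₁,…,P_ℓ) = (σ(P₁),…,σ(P_ℓ))`. -/
def permTabloid (N : ℕ) (l : List ℕ) (σ : Equiv.Perm (Fin N)) (P : RowTabloid N l) :
    RowTabloid N l where
  parts := fun t => (P.parts t).map σ.toEmbedding
  disjoint := fun t t' h => (Finset.disjoint_map _).mpr (P.disjoint t t' h)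
  cover := fun x => by
    obtain ⟨t, ht⟩ := P.cover (σ.symm x)
    exact ⟨t, Finset.mem_map.mpr ⟨σ.symm x, ht, by simp⟩⟩
  cards := fun t => by simp [Finset.card_map, P.cards]

namespace Stmt8Aux

open Finset Equiv

/-- Rational-valued sign of a permutation. -/
def sgnQ {α : Type*} [DecidableEq α] [Fintype α] (π : Equiv.Perm α) : ℚ :=
  ((Equiv.Perm.sign π : ℤ) : ℚ)

lemma sgnQ_mul {α : Type*} [DecidableEq α] [Fintype α] (π ρ : Equiv.Perm α) :
    sgnQ (π * ρ) = sgnQ π * sgnQ ρ := by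
  simp [sgnQ]

lemma sgnQ_mul_self {α : Type*} [DecidableEq α] [Fintype α] (π : Equiv.Perm α) :
    sgnQ π * sgnQ π = 1 := by
  rw [← sgnQ_mul]
  simp [sgnQ]

lemma sgnQ_swap {α : Type*} [DecidableEq α] [Fintype α] {a b : α} (h : a ≠ b) :
    sgnQ (Equiv.swap a b) = -1 := by
  simp [sgnQ, Equiv.Perm.sign_swap h]

lemma sgnQ_one {α : Type*} [DecidableEq α] [Fintype α] :
    sgnQ (1 : Equiv.Perm α) = 1 := by simp [sgnQ]

variable {n d : ℕ}

/-- Sign of a filling, viewed as a permutation via `finProdFinEquiv`. -/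
def sgnF (S : Filling n d) : ℚ := sgnQ (finProdFinEquiv.symm.trans S)

lemma sgnF_permTrans (π : Equiv.Perm (Fin d × Fin n)) (S : Filling n d) :
    sgnF (π.trans S) = sgnQ π * sgnF S := by
  have h : finProdFinEquiv.symm.trans (π.trans S) =
      (finProdFinEquiv.symm.trans S) *
        (((finProdFinEquiv.symm.trans π).trans finProdFinEquiv : Equiv.Perm (Fin (d * n)))) := by
    ext m
    simp [Equiv.Perm.mul_apply]
  rw [sgnF, h, sgnQ_mul]
  have h2 : sgnQ ((finProdFinEquiv.symm.trans π).trans finProdFinEquiv :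
      Equiv.Perm (Fin (d * n))) = sgnQ π := by
    rw [sgnQ, sgnQ, Equiv.Perm.sign_symm_trans_trans]
  rw [h2, sgnF]
  ring

lemma sgnF_transPerm (S : Filling n d) (σ : Equiv.Perm (Fin (d * n))) :
    sgnF (S.trans σ) = sgnQ σ * sgnF S := by
  have h : finProdFinEquiv.symm.trans (S.trans σ) = σ * (finProdFinEquiv.symm.trans S) := by
    ext m; simp [Equiv.Perm.mul_apply]
  rw [sgnF, h, sgnQ_mul, sgnF]

lemma sgnF_mul_self (S : Filling n d) : sgnF S * sgnF S = 1 := sgnQ_mul_self _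

/-- A value-preserving bijection between two finite families with the same multiset of values. -/
lemma exists_valEquiv {ι κ α : Type*} [Fintype ι] [Fintype κ] [DecidableEq α]
    (f : ι → α) (g : κ → α)
    (h : Multiset.map f Finset.univ.val = Multiset.map g Finset.univ.val) :
    ∃ e : ι ≃ κ, ∀ i, f i = g (e i) := by
  classical
  have hcard : ∀ a : α, Fintype.card {i // f i = a} = Fintype.card {k // g k = a} := by
    intro a
    have hc := congrArg (Multiset.count a) h
    rw [Multiset.count_map, Multiset.count_map] at hc
    rw [Fintype.card_subtype, Fintype.card_subtype, Finset.card, Finset.card,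
      Finset.filter_val, Finset.filter_val]
    simpa [eq_comm] using hc
  refine ⟨(Equiv.sigmaFiberEquiv f).symm.trans
    ((Equiv.sigmaCongrRight fun a => Fintype.equivOfCardEq (hcard a)).trans
      (Equiv.sigmaFiberEquiv g)), fun i => ?_⟩
  exact ((Fintype.equivOfCardEq (hcard (f i))) ⟨i, rfl⟩).2.symm

lemma exists_tau (n d : ℕ) (D : Fin d × Fin d → ℕ) :
    ∃ τ : Fin (delta n d D).length ≃ Fin d × Fin d,
      ∀ k, (delta n d D).get k = D (τ k) := by
  apply exists_valEquiv
  have h1 : Multiset.map (delta n d D).get Finset.univ.val = ((delta n d D : List ℕ) : Multiset ℕ) := by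
    rw [Fin.univ_val_map]
    rw [List.ofFn_get]
  rw [h1]
  show (((Multiset.sort (Multiset.map D Finset.univ.val) (· ≤ ·)).reverse : List ℕ) : Multiset ℕ) = _
  rw [Multiset.coe_reverse, Multiset.sort_eq]

/-- A fixed enumeration of the cells of a diagram compatible with `delta`. -/
def tauD (n d : ℕ) (D : Fin d × Fin d → ℕ) : Fin (delta n d D).length ≃ Fin d × Fin d :=
  (exists_tau n d D).choose

lemma tauD_spec (n d : ℕ) (D : Fin d × Fin d → ℕ) (k) :
    (delta n d D).get k = D (tauD n d D k) :=
  (exists_tau n d D).choose_spec k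

end Stmt8Aux
namespace Stmt8Aux

open Finset Equiv

variable {n d : ℕ}

/-- The pair of row indices of a label under a pair of fillings. -/
def rowPair (ST : Filling n d × Filling n d) : Fin (d * n) → Fin d × Fin d :=
  fun m => ((ST.1.symm m).1, (ST.2.symm m).1)

/-- The diagram of fiber cardinalities of a function `Fin (d*n) → Fin d × Fin d`. -/
def corrOf (F : Fin (d * n) → Fin d × Fin d) : Fin d × Fin d → ℕ :=
  fun ij => (Finset.univ.filter fun m => F m = ij).card

/-- The property that all row fibers and column fibers have cardinality `n`. -/
def isGood (F : Fin (d * n) → Fin d × Fin d) : Prop :=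
  (∀ i, (Finset.univ.filter fun m => (F m).1 = i).card = n) ∧
  (∀ j, (Finset.univ.filter fun m => (F m).2 = j).card = n)

lemma corrOf_rowsum (F : Fin (d * n) → Fin d × Fin d) (hF : isGood F) (i : Fin d) :
    ∑ j : Fin d, corrOf F (i, j) = n := by
  have h := Finset.card_eq_sum_card_fiberwise
    (f := fun m => (F m).2) (s := Finset.univ.filter fun m => (F m).1 = i)
    (t := Finset.univ) (fun x _ => Finset.mem_univ _)
  calc ∑ j : Fin d, corrOf F (i, j)
      = ∑ b : Fin d, ((Finset.univ.filter fun m => (F m).1 = i).filter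
          fun a => (F a).2 = b).card := by
        refine Finset.sum_congr rfl fun j _ => ?_
        rw [Finset.filter_filter]
        apply congrArg Finset.card
        ext m
        simp only [corrOf, Finset.mem_filter, Finset.mem_univ, true_and, Prod.ext_iff]
        try tauto
    _ = (Finset.univ.filter fun m => (F m).1 = i).card := h.symm
    _ = n := hF.1 i

lemma corrOf_colsum (F : Fin (d * n) → Fin d × Fin d) (hF : isGood F) (j : Fin d) :
    ∑ i : Fin d, corrOf F (i, j) = n := by
  have h := Finset.card_eq_sum_card_fiberwise
    (f := fun m => (F m).1) (s := Finset.univ.filter fun m => (F m).2 = j)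
    (t := Finset.univ) (fun x _ => Finset.mem_univ _)
  calc ∑ i : Fin d, corrOf F (i, j)
      = ∑ b : Fin d, ((Finset.univ.filter fun m => (F m).2 = j).filter
          fun a => (F a).1 = b).card := by
        refine Finset.sum_congr rfl fun i _ => ?_
        rw [Finset.filter_filter]
        apply congrArg Finset.card
        ext m
        simp only [corrOf, Finset.mem_filter, Finset.mem_univ, true_and, Prod.ext_iff]
        try tauto
    _ = (Finset.univ.filter fun m => (F m).2 = j).card := h.symm
    _ = n := hF.2 j

/-- The correlated diagram attached to a good function. -/
def corrD (F : Fin (d * n) → Fin d × Fin d) (hF : isGood F) : CorrDiagram n d :=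
  ⟨corrOf F, corrOf_rowsum F hF, corrOf_colsum F hF⟩

/-- The row tabloid attached to a function whose diagram is `D`. -/
def tabD (D : CorrDiagram n d) (F : Fin (d * n) → Fin d × Fin d) (hF : corrOf F = D.1) :
    RowTabloid (d * n) (delta n d D.1) where
  parts k := Finset.univ.filter fun m => F m = tauD n d D.1 k
  disjoint k k' hkk' := by
    rw [Finset.disjoint_left]
    intro m hm hm'
    simp only [Finset.mem_filter] at hm hm'
    exact hkk' ((tauD n d D.1).injective (hm.2 ▸ hm'.2))
  cover m := ⟨(tauD n d D.1).symm (F m), by simp⟩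
  cards k := by
    have h1 : (Finset.univ.filter fun m => F m = tauD n d D.1 k).card
        = corrOf F (tauD n d D.1 k) := rfl
    rw [h1, hF, (tauD_spec n d D.1 k).symm]

lemma tabD_parts (D : CorrDiagram n d) (F) (hF : corrOf F = D.1) (k) :
    (tabD D F hF).parts k = Finset.univ.filter fun m => F m = tauD n d D.1 k := rfl

lemma RowTabloid.ext' {N : ℕ} {l : List ℕ} {P Q : RowTabloid N l}
    (h : P.parts = Q.parts) : P = Q := by
  cases P; cases Q
  simp only at h
  subst h
  rfl

open scoped DirectSum

/-- The target module. -/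
abbrev Target (n d : ℕ) := ⨁ D : CorrDiagram n d, RowTabloidModule (d * n) (delta n d D.1)

open Classical in
/-- The basic tabloid attached to a good function. -/
def G (F : Fin (d * n) → Fin d × Fin d) (hF : isGood F) : Target n d :=
  DirectSum.lof ℚ (CorrDiagram n d) (fun D => RowTabloidModule (d * n) (delta n d D.1))
    (corrD F hF) (Finsupp.single (tabD (corrD F hF) F rfl) 1)

lemma G_congr (F F' : Fin (d * n) → Fin d × Fin d) (h : F = F') (hF : isGood F)
    (hF' : isGood F') : G F hF = G F' hF' := by subst h; rfl

open Classical in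
lemma G_eq (F : Fin (d * n) → Fin d × Fin d) (hF : isGood F) (D : CorrDiagram n d)
    (hD : corrOf F = D.1) :
    G F hF = DirectSum.lof ℚ (CorrDiagram n d)
      (fun D => RowTabloidModule (d * n) (delta n d D.1)) D
      (Finsupp.single (tabD D F hD) 1) := by
  have hDD : corrD F hF = D := Subtype.ext hD
  subst hDD
  rfl

lemma rowPair_isGood (S T : Filling n d) : isGood (rowPair (S, T)) := by
  have key : ∀ (U : Filling n d) (i : Fin d),
      (Finset.univ.filter fun m => (U.symm m).1 = i).card = n := by
    intro U i
    have h1 : (Finset.univ.filter fun m => (U.symm m).1 = i).card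
        = (Finset.univ.filter fun x : Fin d × Fin n => x.1 = i).card :=
      Finset.card_equiv U.symm (by simp)
    have h2 : (Finset.univ.filter fun x : Fin d × Fin n => x.1 = i) = {i} ×ˢ Finset.univ := by
      ext x
      simp only [Finset.mem_filter, Finset.mem_univ, true_and, Finset.mem_product,
        Finset.mem_singleton]
      tauto
    rw [h1, h2, Finset.card_product]
    simp
  exact ⟨key S, key T⟩

/-- Value of the quotient map on a basis element. -/
def fval (ST : Filling n d × Filling n d) : Target n d :=
  (sgnF ST.1 * sgnF ST.2) • G (rowPair ST) (rowPair_isGood ST.1 ST.2)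

end Stmt8Aux
namespace Stmt8Aux

open Finset Equiv

variable {n d : ℕ}

/-- The index of the part containing a given label. -/
def kOf {N : ℕ} {l : List ℕ} (P : RowTabloid N l) (m : Fin N) : Fin l.length :=
  (P.cover m).choose

lemma kOf_mem {N : ℕ} {l : List ℕ} (P : RowTabloid N l) (m : Fin N) :
    m ∈ P.parts (kOf P m) := (P.cover m).choose_spec

lemma kOf_eq {N : ℕ} {l : List ℕ} (P : RowTabloid N l) {m : Fin N} {k : Fin l.length}
    (h : m ∈ P.parts k) : kOf P m = k := by
  by_contra hne
  exact (Finset.disjoint_left.mp (P.disjoint _ _ hne) (kOf_mem P m)) h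

lemma parts_eq_filter {N : ℕ} {l : List ℕ} (P : RowTabloid N l) (k : Fin l.length) :
    P.parts k = Finset.univ.filter fun m => kOf P m = k := by
  ext m
  simp only [Finset.mem_filter, Finset.mem_univ, true_and]
  constructor
  · exact kOf_eq P
  · rintro rfl; exact kOf_mem P m

/-- The cell function of a tabloid. -/
def FP (D : CorrDiagram n d) (P : RowTabloid (d * n) (delta n d D.1)) :
    Fin (d * n) → Fin d × Fin d :=
  fun m => tauD n d D.1 (kOf P m)

lemma FP_fiber (D : CorrDiagram n d) (P : RowTabloid (d * n) (delta n d D.1))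
    (pr : Fin d × Fin d → Fin d) (i : Fin d)
    (hsum : ∑ p : Fin d × Fin d, (if pr p = i then D.1 p else 0) = n) :
    (Finset.univ.filter fun m => pr (FP D P m) = i).card = n := by
  classical
  have h := Finset.card_eq_sum_card_fiberwise
    (f := kOf P) (s := Finset.univ.filter fun m => pr (FP D P m) = i)
    (t := Finset.univ) (fun x _ => Finset.mem_univ _)
  rw [h]
  have hterm : ∀ k, ((Finset.univ.filter fun m => pr (FP D P m) = i).filter
      fun a => kOf P a = k).card = if pr (tauD n d D.1 k) = i then D.1 (tauD n d D.1 k) else 0 := by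
    intro k
    rw [Finset.filter_filter]
    by_cases hk : pr (tauD n d D.1 k) = i
    · rw [if_pos hk]
      have : (Finset.univ.filter fun a => pr (FP D P a) = i ∧ kOf P a = k) = P.parts k := by
        rw [parts_eq_filter]
        ext m
        simp only [Finset.mem_filter, Finset.mem_univ, true_and]
        constructor
        · exact fun hh => hh.2
        · intro hh
          refine ⟨?_, hh⟩
          rw [FP, hh]
          exact hk
      rw [this, P.cards, tauD_spec]
    · rw [if_neg hk]
      rw [Finset.card_eq_zero]
      ext m
      simp only [Finset.mem_filter, Finset.mem_univ, true_and, Finset.notMem_empty, iff_false,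
        not_and]
      intro hm hk'
      apply hk
      rw [← hk']
      rw [FP] at hm
      rw [hm]
  calc ∑ k, ((Finset.univ.filter fun m => pr (FP D P m) = i).filter fun a => kOf P a = k).card
      = ∑ k, if pr (tauD n d D.1 k) = i then D.1 (tauD n d D.1 k) else 0 :=
        Finset.sum_congr rfl fun k _ => hterm k
    _ = ∑ p : Fin d × Fin d, (if pr p = i then D.1 p else 0) :=
        Fintype.sum_equiv (tauD n d D.1) _ _ (fun k => rfl)
    _ = n := hsum

lemma FP_fiber_fst (D : CorrDiagram n d) (P : RowTabloid (d * n) (delta n d D.1)) (i : Fin d) :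
    (Finset.univ.filter fun m => (FP D P m).1 = i).card = n := by
  refine FP_fiber D P Prod.fst i ?_
  rw [Fintype.sum_prod_type]
  calc ∑ a : Fin d, ∑ b : Fin d, (if (a, b).1 = i then D.1 (a, b) else 0)
      = ∑ a : Fin d, (if a = i then ∑ b : Fin d, D.1 (a, b) else 0) := by
        refine Finset.sum_congr rfl fun a _ => ?_
        by_cases ha : a = i <;> simp [ha]
    _ = ∑ b : Fin d, D.1 (i, b) := by rw [Finset.sum_ite_eq' Finset.univ i]; simp
    _ = n := D.2.1 i

lemma FP_fiber_snd (D : CorrDiagram n d) (P : RowTabloid (d * n) (delta n d D.1)) (j : Fin d) :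
    (Finset.univ.filter fun m => (FP D P m).2 = j).card = n := by
  refine FP_fiber D P Prod.snd j ?_
  rw [Fintype.sum_prod_type]
  calc ∑ a : Fin d, ∑ b : Fin d, (if (a, b).2 = j then D.1 (a, b) else 0)
      = ∑ a : Fin d, ∑ b : Fin d, (if b = j then D.1 (a, b) else 0) := rfl
    _ = ∑ a : Fin d, D.1 (a, j) := by
        refine Finset.sum_congr rfl fun a _ => ?_
        rw [Finset.sum_ite_eq' Finset.univ j]; simp
    _ = n := D.2.2 j

/-- Construct a filling with prescribed row fibers. -/
def fillingOfFiber (q : Fin (d * n) → Fin d)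
    (hq : ∀ i, (Finset.univ.filter fun m => q m = i).card = n) : Filling n d :=
  ((Equiv.sigmaEquivProd (Fin d) (Fin n)).symm.trans
    (Equiv.sigmaCongrRight fun i =>
      (Fintype.equivFinOfCardEq (by rw [Fintype.card_subtype]; exact hq i) :
        {m // q m = i} ≃ Fin n).symm)).trans
    (Equiv.sigmaFiberEquiv q)

lemma fillingOfFiber_prop (q : Fin (d * n) → Fin d)
    (hq : ∀ i, (Finset.univ.filter fun m => q m = i).card = n) (x : Fin d × Fin n) :
    q (fillingOfFiber q hq x) = x.1 := by
  obtain ⟨i, c⟩ := x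
  exact (((Fintype.equivFinOfCardEq (by rw [Fintype.card_subtype]; exact hq i) :
    {m // q m = i} ≃ Fin n).symm c)).2

lemma fillingOfFiber_symm (q : Fin (d * n) → Fin d)
    (hq : ∀ i, (Finset.univ.filter fun m => q m = i).card = n) (m : Fin (d * n)) :
    ((fillingOfFiber q hq).symm m).1 = q m := by
  conv_rhs => rw [← Equiv.apply_symm_apply (fillingOfFiber q hq) m]
  rw [fillingOfFiber_prop q hq]

/-- The canonical filling pair attached to a tabloid. -/
def SP (D : CorrDiagram n d) (P : RowTabloid (d * n) (delta n d D.1)) : Filling n d :=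
  fillingOfFiber (fun m => (FP D P m).1) (FP_fiber_fst D P)

def TP (D : CorrDiagram n d) (P : RowTabloid (d * n) (delta n d D.1)) : Filling n d :=
  fillingOfFiber (fun m => (FP D P m).2) (FP_fiber_snd D P)

lemma rowPair_SP_TP (D : CorrDiagram n d) (P : RowTabloid (d * n) (delta n d D.1)) :
    rowPair (SP D P, TP D P) = FP D P := by
  funext m
  show (((SP D P).symm m).1, ((TP D P).symm m).1) = FP D P m
  rw [SP, TP, fillingOfFiber_symm, fillingOfFiber_symm]

lemma corrOf_FP (D : CorrDiagram n d) (P : RowTabloid (d * n) (delta n d D.1)) :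
    corrOf (FP D P) = D.1 := by
  funext ij
  have h1 : (Finset.univ.filter fun m => FP D P m = ij)
      = P.parts ((tauD n d D.1).symm ij) := by
    rw [parts_eq_filter]
    ext m
    simp only [Finset.mem_filter, Finset.mem_univ, true_and, FP,
      Equiv.eq_symm_apply]
    exact Finset.mem_filter.trans (and_iff_right (Finset.mem_univ _))
  rw [corrOf]
  show (Finset.univ.filter fun m => FP D P m = ij).card = D.1 ij
  rw [h1, P.cards, tauD_spec, Equiv.apply_symm_apply]

lemma tabD_FP (D : CorrDiagram n d) (P : RowTabloid (d * n) (delta n d D.1)) :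
    tabD D (FP D P) (corrOf_FP D P) = P := by
  apply RowTabloid.ext'
  funext k
  rw [tabD_parts, parts_eq_filter]
  ext m
  simp only [Finset.mem_filter, Finset.mem_univ, true_and, FP,
    EmbeddingLike.apply_eq_iff_eq]

lemma FP_tabD (D : CorrDiagram n d) (F : Fin (d * n) → Fin d × Fin d)
    (hF : corrOf F = D.1) : FP D (tabD D F hF) = F := by
  funext m
  have h := kOf_mem (tabD D F hF) m
  rw [tabD_parts] at h
  simp only [Finset.mem_filter, Finset.mem_univ, true_and] at h
  rw [FP, ← h]

end Stmt8Aux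
namespace Stmt8Aux

open Finset Equiv

variable {n d : ℕ}

lemma fst_swap {α β : Type*} [DecidableEq (α × β)] {a b : α × β} (h : a.1 = b.1)
    (y : α × β) : (Equiv.swap a b y).1 = y.1 := by
  by_cases h1 : y = a
  · subst h1; rw [Equiv.swap_apply_left, h]
  by_cases h2 : y = b
  · subst h2; rw [Equiv.swap_apply_right, h]
  · rw [Equiv.swap_apply_of_ne_of_ne h1 h2]

lemma rel_swap_left (S T : Filling n d) {a b : Fin d × Fin n} (hab : a ≠ b)
    (h1 : a.1 = b.1) :
    (Submodule.Quotient.mk (p := Submodule.span ℚ (AntisymSet n d))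
        (Finsupp.single ((Equiv.swap a b).trans S, T) (1 : ℚ)))
      = - Submodule.Quotient.mk (Finsupp.single (S, T) (1 : ℚ)) := by
  have hb : ((a.1, b.2) : Fin d × Fin n) = b := by rw [h1]
  have hmem : (Finsupp.single ((S, T) : Filling n d × Filling n d) (1 : ℚ)
      + Finsupp.single ((Equiv.swap a b).trans S, T) 1)
      ∈ Submodule.span ℚ (AntisymSet n d) := by
    apply Submodule.subset_span
    refine ⟨S, T, a.1, a.2, b.2, fun h => hab (Prod.ext h1 h), Or.inl ?_⟩
    rw [hb, Prod.mk.eta]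
  have h0 : (Submodule.Quotient.mk (p := Submodule.span ℚ (AntisymSet n d))
      (Finsupp.single ((S, T) : Filling n d × Filling n d) (1 : ℚ)
        + Finsupp.single ((Equiv.swap a b).trans S, T) 1)) = 0 :=
    (Submodule.Quotient.mk_eq_zero _).mpr hmem
  rw [Submodule.Quotient.mk_add] at h0
  exact eq_neg_of_add_eq_zero_right h0

lemma rel_swap_right (S T : Filling n d) {a b : Fin d × Fin n} (hab : a ≠ b)
    (h1 : a.1 = b.1) :
    (Submodule.Quotient.mk (p := Submodule.span ℚ (AntisymSet n d))
        (Finsupp.single (S, (Equiv.swap a b).trans T) (1 : ℚ)))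
      = - Submodule.Quotient.mk (Finsupp.single (S, T) (1 : ℚ)) := by
  have hb : ((a.1, b.2) : Fin d × Fin n) = b := by rw [h1]
  have hmem : (Finsupp.single ((S, T) : Filling n d × Filling n d) (1 : ℚ)
      + Finsupp.single (S, (Equiv.swap a b).trans T) 1)
      ∈ Submodule.span ℚ (AntisymSet n d) := by
    apply Submodule.subset_span
    refine ⟨S, T, a.1, a.2, b.2, fun h => hab (Prod.ext h1 h), Or.inr ?_⟩
    rw [hb, Prod.mk.eta]
  have h0 : (Submodule.Quotient.mk (p := Submodule.span ℚ (AntisymSet n d))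
      (Finsupp.single ((S, T) : Filling n d × Filling n d) (1 : ℚ)
        + Finsupp.single (S, (Equiv.swap a b).trans T) 1)) = 0 :=
    (Submodule.Quotient.mk_eq_zero _).mpr hmem
  rw [Submodule.Quotient.mk_add] at h0
  exact eq_neg_of_add_eq_zero_right h0

end Stmt8Aux
namespace Stmt8Aux

open Finset Equiv

variable {n d : ℕ}

lemma mk_permTrans_left (N : ℕ) :
    ∀ (π : Equiv.Perm (Fin d × Fin n)),
      (Finset.univ.filter fun x => π x ≠ x).card ≤ N →
      (∀ x, (π x).1 = x.1) → ∀ (S T : Filling n d),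
      (Submodule.Quotient.mk (p := Submodule.span ℚ (AntisymSet n d))
          (Finsupp.single (π.trans S, T) (1 : ℚ)))
        = sgnQ π • Submodule.Quotient.mk (Finsupp.single (S, T) (1 : ℚ)) := by
  induction N with
  | zero =>
    intro π hcard hπ S T
    have hπ1 : π = 1 := by
      apply Equiv.ext
      intro x
      show π x = x
      by_contra hx
      have hmem : x ∈ Finset.univ.filter fun y => π y ≠ y := by
        simp only [Finset.mem_filter, Finset.mem_univ, true_and]
        exact hx
      have h2 := Finset.card_pos.mpr ⟨x, hmem⟩
      omega
    subst hπ1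
    rw [sgnQ_one, one_smul]
    rfl
  | succ N ih =>
    intro π hcard hπ S T
    by_cases hπ1 : π = 1
    · subst hπ1
      rw [sgnQ_one, one_smul]
      rfl
    · obtain ⟨x, hx⟩ : ∃ x, π x ≠ x := by
        by_contra h
        push_neg at h
        exact hπ1 (Equiv.ext h)
      set s : Equiv.Perm (Fin d × Fin n) := Equiv.swap x (π x) with hs
      have hfst : x.1 = (π x).1 := (hπ x).symm
      set π₂ : Equiv.Perm (Fin d × Fin n) := π.trans s with hπ₂
      have hππ₂ : π = π₂.trans s := by
        rw [hπ₂, Equiv.trans_assoc, hs, Equiv.swap_swap, Equiv.trans_refl]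
      have hπ₂fst : ∀ y, (π₂ y).1 = y.1 := by
        intro y
        have : π₂ y = s (π y) := rfl
        rw [this, hs, fst_swap hfst, hπ]
      have hsub : (Finset.univ.filter fun y => π₂ y ≠ y)
          ⊂ (Finset.univ.filter fun y => π y ≠ y) := by
        rw [Finset.ssubset_iff_of_subset]
        · refine ⟨x, ?_, ?_⟩
          · simp only [Finset.mem_filter, Finset.mem_univ, true_and]; exact hx
          · simp only [Finset.mem_filter, Finset.mem_univ, true_and, not_not, ne_eq]
            show s (π x) = x
            exact Equiv.swap_apply_right x (π x)
        · intro y hy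
          simp only [Finset.mem_filter, Finset.mem_univ, true_and, ne_eq] at hy ⊢
          intro hyfix
          apply hy
          show s (π y) = y
          rw [hyfix, hs]
          by_cases h1 : y = x
          · exact absurd (h1 ▸ hyfix) hx
          by_cases h2 : y = π x
          · exfalso
            rw [h2] at hyfix
            exact hx (π.injective hyfix)
          · exact Equiv.swap_apply_of_ne_of_ne h1 h2
      have hcard₂ : (Finset.univ.filter fun y => π₂ y ≠ y).card ≤ N :=
        Nat.lt_succ_iff.mp (lt_of_lt_of_le (Finset.card_lt_card hsub) hcard)
      have hxne : x ≠ π x := Ne.symm hx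
      calc (Submodule.Quotient.mk (p := Submodule.span ℚ (AntisymSet n d))
              (Finsupp.single (π.trans S, T) (1 : ℚ)))
          = Submodule.Quotient.mk (Finsupp.single (π₂.trans (s.trans S), T) (1 : ℚ)) := by
            rw [← Equiv.trans_assoc, ← hππ₂]
        _ = sgnQ π₂ • Submodule.Quotient.mk (Finsupp.single (s.trans S, T) (1 : ℚ)) :=
            ih π₂ hcard₂ hπ₂fst (s.trans S) T
        _ = sgnQ π₂ • (- Submodule.Quotient.mk (Finsupp.single (S, T) (1 : ℚ))) := by
            rw [hs, rel_swap_left S T hxne hfst]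
        _ = sgnQ π • Submodule.Quotient.mk (Finsupp.single (S, T) (1 : ℚ)) := by
            have hsgn : sgnQ π = - sgnQ π₂ := by
              have : π = s * π₂ := hππ₂
              rw [this, sgnQ_mul, sgnQ_swap hxne]
              ring
            rw [hsgn, smul_neg, neg_smul]

lemma mk_permTrans_right (N : ℕ) :
    ∀ (ρ : Equiv.Perm (Fin d × Fin n)),
      (Finset.univ.filter fun x => ρ x ≠ x).card ≤ N →
      (∀ x, (ρ x).1 = x.1) → ∀ (S T : Filling n d),
      (Submodule.Quotient.mk (p := Submodule.span ℚ (AntisymSet n d))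
          (Finsupp.single (S, ρ.trans T) (1 : ℚ)))
        = sgnQ ρ • Submodule.Quotient.mk (Finsupp.single (S, T) (1 : ℚ)) := by
  induction N with
  | zero =>
    intro ρ hcard hπ S T
    have hπ1 : ρ = 1 := by
      apply Equiv.ext
      intro x
      show ρ x = x
      by_contra hx
      have hmem : x ∈ Finset.univ.filter fun y => ρ y ≠ y := by
        simp only [Finset.mem_filter, Finset.mem_univ, true_and]
        exact hx
      have h2 := Finset.card_pos.mpr ⟨x, hmem⟩
      omega
    subst hπ1
    rw [sgnQ_one, one_smul]
    rfl
  | succ N ih =>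
    intro ρ hcard hπ S T
    by_cases hπ1 : ρ = 1
    · subst hπ1
      rw [sgnQ_one, one_smul]
      rfl
    · obtain ⟨x, hx⟩ : ∃ x, ρ x ≠ x := by
        by_contra h
        push_neg at h
        exact hπ1 (Equiv.ext h)
      set s : Equiv.Perm (Fin d × Fin n) := Equiv.swap x (ρ x) with hs
      have hfst : x.1 = (ρ x).1 := (hπ x).symm
      set π₂ : Equiv.Perm (Fin d × Fin n) := ρ.trans s with hπ₂
      have hππ₂ : ρ = π₂.trans s := by
        rw [hπ₂, Equiv.trans_assoc, hs, Equiv.swap_swap, Equiv.trans_refl]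
      have hπ₂fst : ∀ y, (π₂ y).1 = y.1 := by
        intro y
        have : π₂ y = s (ρ y) := rfl
        rw [this, hs, fst_swap hfst, hπ]
      have hsub : (Finset.univ.filter fun y => π₂ y ≠ y)
          ⊂ (Finset.univ.filter fun y => ρ y ≠ y) := by
        rw [Finset.ssubset_iff_of_subset]
        · refine ⟨x, ?_, ?_⟩
          · simp only [Finset.mem_filter, Finset.mem_univ, true_and]; exact hx
          · simp only [Finset.mem_filter, Finset.mem_univ, true_and, not_not, ne_eq]
            show s (ρ x) = x
            exact Equiv.swap_apply_right x (ρ x)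
        · intro y hy
          simp only [Finset.mem_filter, Finset.mem_univ, true_and, ne_eq] at hy ⊢
          intro hyfix
          apply hy
          show s (ρ y) = y
          rw [hyfix, hs]
          by_cases h1 : y = x
          · exact absurd (h1 ▸ hyfix) hx
          by_cases h2 : y = ρ x
          · exfalso
            rw [h2] at hyfix
            exact hx (ρ.injective hyfix)
          · exact Equiv.swap_apply_of_ne_of_ne h1 h2
      have hcard₂ : (Finset.univ.filter fun y => π₂ y ≠ y).card ≤ N :=
        Nat.lt_succ_iff.mp (lt_of_lt_of_le (Finset.card_lt_card hsub) hcard)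
      have hxne : x ≠ ρ x := Ne.symm hx
      calc (Submodule.Quotient.mk (p := Submodule.span ℚ (AntisymSet n d))
              (Finsupp.single (S, ρ.trans T) (1 : ℚ)))
          = Submodule.Quotient.mk (Finsupp.single (S, π₂.trans (s.trans T)) (1 : ℚ)) := by
            rw [← Equiv.trans_assoc, ← hππ₂]
        _ = sgnQ π₂ • Submodule.Quotient.mk (Finsupp.single (S, s.trans T) (1 : ℚ)) :=
            ih π₂ hcard₂ hπ₂fst S (s.trans T)
        _ = sgnQ π₂ • (- Submodule.Quotient.mk (Finsupp.single (S, T) (1 : ℚ))) := by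
            rw [hs, rel_swap_right S T hxne hfst]
        _ = sgnQ ρ • Submodule.Quotient.mk (Finsupp.single (S, T) (1 : ℚ)) := by
            have hsgn : sgnQ ρ = - sgnQ π₂ := by
              have : ρ = s * π₂ := hππ₂
              rw [this, sgnQ_mul, sgnQ_swap hxne]
              ring
            rw [hsgn, smul_neg, neg_smul]

lemma mk_eq_of_rowPair_eq (S T S' T' : Filling n d)
    (h : rowPair (S, T) = rowPair (S', T')) :
    (Submodule.Quotient.mk (p := Submodule.span ℚ (AntisymSet n d))
        (Finsupp.single (S, T) (1 : ℚ)))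
      = (sgnF S * sgnF T * (sgnF S' * sgnF T')) •
        Submodule.Quotient.mk (Finsupp.single (S', T') (1 : ℚ)) := by
  set π : Equiv.Perm (Fin d × Fin n) := S.trans S'.symm with hπdef
  set ρ : Equiv.Perm (Fin d × Fin n) := T.trans T'.symm with hρdef
  have hπ : ∀ x, (π x).1 = x.1 := by
    intro x
    have h1 := congrFun h (S x)
    simp only [rowPair] at h1
    have h2 := (Prod.ext_iff.mp h1).1
    rw [Equiv.symm_apply_apply] at h2
    exact h2.symm
  have hρ : ∀ x, (ρ x).1 = x.1 := by
    intro x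
    have h1 := congrFun h (T x)
    simp only [rowPair] at h1
    have h2 := (Prod.ext_iff.mp h1).2
    rw [Equiv.symm_apply_apply] at h2
    exact h2.symm
  have hS : S = π.trans S' := by
    ext x
    simp [hπdef]
  have hT : T = ρ.trans T' := by
    ext x
    simp [hρdef]
  rw [hS, hT]
  rw [mk_permTrans_left _ π le_rfl hπ S' (ρ.trans T'),
    mk_permTrans_right _ ρ le_rfl hρ S' T', smul_smul,
    sgnF_permTrans, sgnF_permTrans]
  congr 1
  have h1 := sgnF_mul_self S'
  have h2 := sgnF_mul_self T'
  linear_combination (-(sgnQ π * sgnQ ρ * sgnF T' * sgnF T')) * h1 - (sgnQ π * sgnQ ρ) * h2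

end Stmt8Aux
namespace Stmt8Aux

open Finset Equiv

variable {n d : ℕ}

open Classical in
def E0 (n d : ℕ) : PSpace n d →ₗ[ℚ] Target n d :=
  Finsupp.lift (Target n d) ℚ (Filling n d × Filling n d) fval

lemma E0_single (ST : Filling n d × Filling n d) :
    E0 n d (Finsupp.single ST 1) = fval ST := by
  classical
  rw [E0, Finsupp.lift_apply, Finsupp.sum_single_index (by simp), one_smul]

lemma rowPair_swap_left (S T : Filling n d) (a b : Fin d × Fin n) (h1 : a.1 = b.1) :
    rowPair ((Equiv.swap a b).trans S, T) = rowPair (S, T) := by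
  funext m
  show ((((Equiv.swap a b).trans S).symm m).1, (T.symm m).1) = ((S.symm m).1, (T.symm m).1)
  have : ((Equiv.swap a b).trans S).symm m = (Equiv.swap a b).symm (S.symm m) := rfl
  rw [this, Equiv.symm_swap, fst_swap h1]

lemma rowPair_swap_right (S T : Filling n d) (a b : Fin d × Fin n) (h1 : a.1 = b.1) :
    rowPair (S, (Equiv.swap a b).trans T) = rowPair (S, T) := by
  funext m
  show ((S.symm m).1, (((Equiv.swap a b).trans T).symm m).1) = ((S.symm m).1, (T.symm m).1)
  have : ((Equiv.swap a b).trans T).symm m = (Equiv.swap a b).symm (T.symm m) := rfl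
  rw [this, Equiv.symm_swap, fst_swap h1]

lemma fval_swap_left (S T : Filling n d) {a b : Fin d × Fin n} (hab : a ≠ b) (h1 : a.1 = b.1) :
    fval ((Equiv.swap a b).trans S, T) = - fval (S, T) := by
  rw [fval, fval]
  have hG : G (rowPair ((Equiv.swap a b).trans S, T))
        (rowPair_isGood ((Equiv.swap a b).trans S) T)
      = G (rowPair (S, T)) (rowPair_isGood S T) :=
    G_congr _ _ (rowPair_swap_left S T a b h1) _ _
  rw [hG]
  show (sgnF ((Equiv.swap a b).trans S) * sgnF T) • _ = _
  rw [sgnF_permTrans, sgnQ_swap hab]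
  rw [show (-1 * sgnF S * sgnF T) = -(sgnF (S, T).1 * sgnF (S, T).2) by ring]
  exact neg_smul (sgnF (S, T).1 * sgnF (S, T).2) (G (rowPair (S, T)) (rowPair_isGood S T))

lemma fval_swap_right (S T : Filling n d) {a b : Fin d × Fin n} (hab : a ≠ b) (h1 : a.1 = b.1) :
    fval (S, (Equiv.swap a b).trans T) = - fval (S, T) := by
  rw [fval, fval]
  have hG : G (rowPair (S, (Equiv.swap a b).trans T))
        (rowPair_isGood S ((Equiv.swap a b).trans T))
      = G (rowPair (S, T)) (rowPair_isGood S T) :=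
    G_congr _ _ (rowPair_swap_right S T a b h1) _ _
  rw [hG]
  show (sgnF S * sgnF ((Equiv.swap a b).trans T)) • _ = _
  rw [sgnF_permTrans, sgnQ_swap hab]
  rw [show (sgnF S * (-1 * sgnF T)) = -(sgnF (S, T).1 * sgnF (S, T).2) by ring]
  exact neg_smul (sgnF (S, T).1 * sgnF (S, T).2) (G (rowPair (S, T)) (rowPair_isGood S T))

lemma hker (n d : ℕ) : Submodule.span ℚ (AntisymSet n d) ≤ LinearMap.ker (E0 n d) := by
  rw [Submodule.span_le]
  rintro x ⟨S, T, i, c₁, c₂, hc, hx⟩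
  have hne : ((i, c₁) : Fin d × Fin n) ≠ (i, c₂) := fun h => hc (congrArg Prod.snd h)
  have h1 : ((i, c₁) : Fin d × Fin n).1 = ((i, c₂) : Fin d × Fin n).1 := rfl
  simp only [SetLike.mem_coe, LinearMap.mem_ker]
  rcases hx with h | h <;> subst h <;> rw [map_add, E0_single, E0_single]
  · rw [fval_swap_left S T hne h1]; exact add_neg_cancel _
  · rw [fval_swap_right S T hne h1]; exact add_neg_cancel _

def EW (n d : ℕ) : Wspace n d →ₗ[ℚ] Target n d :=
  Submodule.liftQ _ (E0 n d) (hker n d)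

lemma EW_mk (x : PSpace n d) :
    EW n d (Submodule.Quotient.mk x) = E0 n d x := rfl

open Classical in
def PhiC (D : CorrDiagram n d) :
    RowTabloidModule (d * n) (delta n d D.1) →ₗ[ℚ] Wspace n d :=
  Finsupp.lift (Wspace n d) ℚ (RowTabloid (d * n) (delta n d D.1)) fun P =>
    (sgnF (SP D P) * sgnF (TP D P)) •
      Submodule.Quotient.mk (Finsupp.single (SP D P, TP D P) 1)

lemma PhiC_single (D : CorrDiagram n d) (P : RowTabloid (d * n) (delta n d D.1)) :
    PhiC D (Finsupp.single P 1) = (sgnF (SP D P) * sgnF (TP D P)) •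
      Submodule.Quotient.mk (Finsupp.single (SP D P, TP D P) 1) := by
  classical
  rw [PhiC, Finsupp.lift_apply, Finsupp.sum_single_index (by simp), one_smul]

open Classical in
def Phi (n d : ℕ) : Target n d →ₗ[ℚ] Wspace n d :=
  DirectSum.toModule ℚ (CorrDiagram n d) (Wspace n d) PhiC

open Classical in
lemma Phi_lof (D : CorrDiagram n d) (P : RowTabloid (d * n) (delta n d D.1)) :
    Phi n d (DirectSum.lof ℚ (CorrDiagram n d)
        (fun D => RowTabloidModule (d * n) (delta n d D.1)) D (Finsupp.single P 1))
      = (sgnF (SP D P) * sgnF (TP D P)) •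
          Submodule.Quotient.mk (Finsupp.single (SP D P, TP D P) 1) := by
  rw [Phi, DirectSum.toModule_lof, PhiC_single]

end Stmt8Aux
namespace Stmt8Aux

open Finset Equiv

variable {n d : ℕ}

lemma comp1 (n d : ℕ) : (EW n d).comp (Phi n d) = LinearMap.id := by
  classical
  apply DirectSum.linearMap_ext
  intro D
  apply Finsupp.lhom_ext
  intro P b
  have hb : Finsupp.single P b = b • Finsupp.single P (1 : ℚ) := by
    rw [Finsupp.smul_single', mul_one]
  simp only [LinearMap.coe_comp, Function.comp_apply, LinearMap.id_comp]
  rw [hb, map_smul, map_smul, map_smul]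
  congr 1
  rw [Phi_lof, map_smul, EW_mk, E0_single, fval]
  rw [smul_smul]
  have hG : G (rowPair (SP D P, TP D P)) (rowPair_isGood (SP D P) (TP D P))
      = G (FP D P) ⟨FP_fiber_fst D P, FP_fiber_snd D P⟩ :=
    G_congr _ _ (rowPair_SP_TP D P) _ _
  rw [hG]
  have hc : (sgnF (SP D P) * sgnF (TP D P)) * (sgnF (SP D P, TP D P).1 * sgnF (SP D P, TP D P).2)
      = 1 := by
    have h1 := sgnF_mul_self (SP D P)
    have h2 := sgnF_mul_self (TP D P)
    show (sgnF (SP D P) * sgnF (TP D P)) * (sgnF (SP D P) * sgnF (TP D P)) = 1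
    linear_combination (sgnF (TP D P) * sgnF (TP D P)) * h1 + h2
  rw [hc, one_smul]
  rw [G_eq (FP D P) ⟨FP_fiber_fst D P, FP_fiber_snd D P⟩ D (corrOf_FP D P), tabD_FP]

lemma comp2 (n d : ℕ) : (Phi n d).comp (EW n d) = LinearMap.id := by
  classical
  apply Submodule.linearMap_qext
  apply Finsupp.lhom_ext
  intro ST b
  obtain ⟨S, T⟩ := ST
  have hb : Finsupp.single ((S, T) : Filling n d × Filling n d) b
      = b • Finsupp.single ((S, T) : Filling n d × Filling n d) (1 : ℚ) := by
    rw [Finsupp.smul_single', mul_one]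
  simp only [LinearMap.coe_comp, Function.comp_apply, LinearMap.id_comp]
  rw [hb, map_smul, map_smul, map_smul]
  congr 1
  rw [Submodule.mkQ_apply, EW_mk, E0_single, fval, map_smul]
  set F₀ := rowPair (S, T) with hF₀
  set D₀ : CorrDiagram n d := corrD F₀ (rowPair_isGood S T) with hD₀
  set Q : RowTabloid (d * n) (delta n d D₀.1) := tabD D₀ F₀ rfl with hQ
  have hPhiG : Phi n d (G F₀ (rowPair_isGood S T))
      = (sgnF (SP D₀ Q) * sgnF (TP D₀ Q)) •
          Submodule.Quotient.mk (Finsupp.single (SP D₀ Q, TP D₀ Q) 1) := by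
    rw [G]
    exact Phi_lof D₀ Q
  rw [hPhiG, smul_smul]
  have hrp : rowPair (S, T) = rowPair (SP D₀ Q, TP D₀ Q) :=
    ((rowPair_SP_TP D₀ Q).trans (FP_tabD D₀ F₀ rfl)).symm
  rw [mk_eq_of_rowPair_eq S T (SP D₀ Q) (TP D₀ Q) hrp]

lemma corrOf_comp_perm (F : Fin (d * n) → Fin d × Fin d) (σ : Equiv.Perm (Fin (d * n))) :
    corrOf (F ∘ σ.symm) = corrOf F := by
  funext ij
  exact Finset.card_equiv σ.symm (by simp [corrOf])

lemma isGood_comp_perm (F : Fin (d * n) → Fin d × Fin d) (hF : isGood F)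
    (σ : Equiv.Perm (Fin (d * n))) : isGood (F ∘ σ.symm) := by
  constructor
  · intro i
    rw [Finset.card_equiv σ.symm (t := Finset.univ.filter fun m => (F m).1 = i) (by simp)]
    exact hF.1 i
  · intro j
    rw [Finset.card_equiv σ.symm (t := Finset.univ.filter fun m => (F m).2 = j) (by simp)]
    exact hF.2 j

open Classical in
lemma G_comp_perm (F : Fin (d * n) → Fin d × Fin d) (hF : isGood F)
    (σ : Equiv.Perm (Fin (d * n))) (hF' : isGood (F ∘ σ.symm)) (D : CorrDiagram n d) :
    G (F ∘ σ.symm) hF' D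
      = Finsupp.mapDomain (permTabloid (d * n) (delta n d D.1) σ) (G F hF D) := by
  have hc : corrOf (F ∘ σ.symm) = (corrD F hF).1 := corrOf_comp_perm F σ
  have h1 : G F hF = DirectSum.lof ℚ (CorrDiagram n d)
      (fun D => RowTabloidModule (d * n) (delta n d D.1)) (corrD F hF)
      (Finsupp.single (tabD (corrD F hF) F rfl) 1) := rfl
  have h2 : G (F ∘ σ.symm) hF' = DirectSum.lof ℚ (CorrDiagram n d)
      (fun D => RowTabloidModule (d * n) (delta n d D.1)) (corrD F hF)
      (Finsupp.single (tabD (corrD F hF) (F ∘ σ.symm) hc) 1) :=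
    G_eq _ hF' (corrD F hF) hc
  have h3 : tabD (corrD F hF) (F ∘ σ.symm) hc
      = permTabloid (d * n) (delta n d (corrD F hF).1) σ (tabD (corrD F hF) F rfl) := by
    apply RowTabloid.ext'
    funext k
    show (Finset.univ.filter fun m => F (σ.symm m) = tauD n d (corrD F hF).1 k)
      = (Finset.univ.filter fun m => F m = tauD n d (corrD F hF).1 k).map σ.toEmbedding
    ext m
    rw [Finset.mem_map_equiv]
    simp
  rw [h1, h2, h3]
  by_cases hD : D = corrD F hF
  · subst hD
    rw [DirectSum.lof_apply, DirectSum.lof_apply, Finsupp.mapDomain_single]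
  · rw [DirectSum.lof_eq_of, DirectSum.lof_eq_of]
    exact (DirectSum.of_eq_of_ne _ _ _ hD).trans
      ((congrArg (fun v : RowTabloidModule (d * n) (delta n d D.1) =>
          Finsupp.mapDomain (permTabloid (d * n) (delta n d D.1) σ) v)
        (DirectSum.of_eq_of_ne (β := fun D : CorrDiagram n d =>
          RowTabloidModule (d * n) (delta n d D.1)) (corrD F hF) D _ hD)).trans Finsupp.mapDomain_zero).symm

end Stmt8Aux
open Stmt8Aux in
open scoped DirectSum in
/-- `W(d)` is isomorphic to `⊕_D ℛ(δ(D))` (sum over all `(d,n)`-correlated diagrams) as a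
`ℚ[S_{dn}]`-module: there is a `ℚ`-linear equivalence intertwining the diagonal
`S_{dn}`-action on `W(d)` with the componentwise action on the direct sum. -/
theorem stmt8 (n d : ℕ) (hn : 0 < n) (hd : 0 < d) :
    ∃ e : Wspace n d ≃ₗ[ℚ]
        (⨁ D : CorrDiagram n d, RowTabloidModule (d * n) (delta n d D.1)),
      ∀ (σ : Equiv.Perm (Fin (d * n))) (S T : Filling n d) (D : CorrDiagram n d),
        e (Submodule.Quotient.mk
            (Finsupp.single ((S.trans σ, T.trans σ) : Filling n d × Filling n d) (1 : ℚ))) D =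
        Finsupp.mapDomain (permTabloid (d * n) (delta n d D.1) σ)
          (e (Submodule.Quotient.mk
              (Finsupp.single ((S, T) : Filling n d × Filling n d) (1 : ℚ))) D) := by
  classical
  refine ⟨LinearEquiv.ofLinear (EW n d) (Phi n d) (comp1 n d) (comp2 n d), ?_⟩
  intro σ S T D
  rw [LinearEquiv.ofLinear_apply, LinearEquiv.ofLinear_apply, EW_mk, EW_mk,
    E0_single, E0_single, fval, fval]
  have hrow : rowPair (S.trans σ, T.trans σ) = rowPair (S, T) ∘ σ.symm := rfl
  rw [G_congr _ _ hrow (rowPair_isGood _ _) (isGood_comp_perm _ (rowPair_isGood S T) σ)]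
  have hsc : sgnF ((S.trans σ, T.trans σ) : Filling n d × Filling n d).1 *
      sgnF ((S.trans σ, T.trans σ) : Filling n d × Filling n d).2 = sgnF S * sgnF T := by
    show sgnF (S.trans σ) * sgnF (T.trans σ) = _
    rw [sgnF_transPerm, sgnF_transPerm]
    linear_combination (sgnF S * sgnF T) * sgnQ_mul_self σ
  rw [hsc]
  rw [DFinsupp.smul_apply, DFinsupp.smul_apply]
  rw [G_comp_perm (rowPair (S, T)) (rowPair_isGood S T) σ
    (isGood_comp_perm _ (rowPair_isGood S T) σ) D]
  rw [Finsupp.mapDomain_smul]
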